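/- Let T = ⌈(9 + 7·log₂ d)/4⌉. Then the Newton iterate λ_{T+1} lies in the region of quadratic convergence {λ ∈ D : δ(λ) < 1/2}; that is, |ψ'(λ_{T+1})|/√(ψ''(λ_{T+1})) < 1/2. In particular, Newton's method started from λ₀ = 1 − η g(i*) reaches this region after O(log d) iterations. -/

import Mathlib

set_option maxHeartbeats 1000000


theorem newton_step (d : ℕ) (hd : 0 < d) (w b : Fin d → ℝ)
    (hw1 : ∀ i, 1 ≤ w i) (hb : ∀ i, 0 ≤ b i)
    (x : ℝ) (hx : 1 ≤ x) (hS : 1 ≤ ∑ i, w i / (x + b i)) :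
    1 ≤ x + ((∑ i, w i / (x + b i)) - 1) / (∑ i, w i / (x + b i) ^ 2) ∧
    (1 ≤ ∑ i, w i / ((x + ((∑ i, w i / (x + b i)) - 1) / (∑ i, w i / (x + b i) ^ 2)) + b i)) ∧
    4 * x ^ 2 * (((∑ i, w i / ((x + ((∑ i, w i / (x + b i)) - 1) / (∑ i, w i / (x + b i) ^ 2)) + b i)) - 1) /
        Real.sqrt (∑ i, w i / ((x + ((∑ i, w i / (x + b i)) - 1) / (∑ i, w i / (x + b i) ^ 2)) + b i) ^ 2))
      ≤ (x + ((∑ i, w i / (x + b i)) - 1) / (∑ i, w i / (x + b i) ^ 2)) ^ 2 *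
        (((∑ i, w i / (x + b i)) - 1) / Real.sqrt (∑ i, w i / (x + b i) ^ 2)) := by
  have hxpos : (0:ℝ) < x := lt_of_lt_of_le one_pos hx
  have hy : ∀ i, 0 < x + b i := fun i => by have := hb i; linarith
  have hw0 : ∀ i, (0:ℝ) < w i := fun i => lt_of_lt_of_le one_pos (hw1 i)
  set S := ∑ i, w i / (x + b i) with hSdef
  set fp := ∑ i, w i / (x + b i) ^ 2 with hfpdef
  have hfp : 0 < fp := Finset.sum_pos (fun i _ => div_pos (hw0 i) (pow_pos (hy i) 2)) ⟨⟨0, hd⟩, Finset.mem_univ _⟩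
  set s := (S - 1) / fp with hsdef
  have hs : 0 ≤ s := div_nonneg (by linarith) hfp.le
  have hsfp : s * fp = S - 1 := div_mul_cancel₀ _ hfp.ne'
  -- new point
  have hx' : x + s = x + (S - 1) / fp := rfl
  have hys : ∀ i, (x + s) + b i = (x + b i) + s := fun i => by ring
  -- rewrite the sums at the new point
  have hSnew : ∑ i, w i / ((x + s) + b i) = ∑ i, w i / ((x + b i) + s) :=
    Finset.sum_congr rfl fun i _ => by rw [hys i]
  have hfpnew : ∑ i, w i / ((x + s) + b i) ^ 2 = ∑ i, w i / ((x + b i) + s) ^ 2 :=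
    Finset.sum_congr rfl fun i _ => by rw [hys i]
  set S' := ∑ i, w i / ((x + b i) + s) with hS'def
  set fp' := ∑ i, w i / ((x + b i) + s) ^ 2 with hfp'def
  have hy' : ∀ i, 0 < (x + b i) + s := fun i => by have := hy i; linarith
  have hfp' : 0 < fp' := Finset.sum_pos (fun i _ => div_pos (hw0 i) (pow_pos (hy' i) 2)) ⟨⟨0, hd⟩, Finset.mem_univ _⟩
  set C := ∑ i, w i / ((x + b i) ^ 2 * ((x + b i) + s)) with hCdef
  have hC : 0 ≤ C := Finset.sum_nonneg fun i _ => div_nonneg (hw0 i).le (mul_nonneg (sq_nonneg _) (hy' i).le)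
  -- key identity : S' - 1 = s^2 * C
  have hid : S' - 1 = s ^ 2 * C := by
    have e1 : S' = S - s * ∑ i, w i / ((x + b i) * ((x + b i) + s)) := by
      rw [hS'def, hSdef, Finset.mul_sum, ← Finset.sum_sub_distrib]
      refine Finset.sum_congr rfl fun i _ => ?_
      have h1 := (hy i).ne'
      have h2 := (hy' i).ne'
      field_simp
      ring
    have e2 : fp - ∑ i, w i / ((x + b i) * ((x + b i) + s)) = s * C := by
      rw [hfpdef, hCdef, Finset.mul_sum, ← Finset.sum_sub_distrib]
      refine Finset.sum_congr rfl fun i _ => ?_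
      have h1 := (hy i).ne'
      have h2 := (hy' i).ne'
      field_simp
      ring
    calc S' - 1 = s * fp - s * ∑ i, w i / ((x + b i) * ((x + b i) + s)) := by
          rw [e1, hsfp]; ring
      _ = s * (fp - ∑ i, w i / ((x + b i) * ((x + b i) + s))) := by ring
      _ = s ^ 2 * C := by rw [e2]; ring
  have hsqfp : (0:ℝ) < Real.sqrt fp := Real.sqrt_pos.mpr hfp
  have hsqfp' : (0:ℝ) < Real.sqrt fp' := Real.sqrt_pos.mpr hfp'
  have hs2C : 0 ≤ s ^ 2 * C := mul_nonneg (sq_nonneg s) hC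
  refine ⟨by linarith, ?_, ?_⟩
  · rw [hSnew]; linarith [hid]
  · rw [hSnew, hfpnew]
    have hrhs : (S - 1) / Real.sqrt fp = s * Real.sqrt fp := by
      rw [← hsfp, mul_div_assoc, Real.div_sqrt]
    have hCS : C ^ 2 ≤ fp / x ^ 2 * fp' := by
      have h1 : C = ∑ i, (Real.sqrt (w i) / (x + b i) ^ 2) * (Real.sqrt (w i) / ((x + b i) + s)) := by
        refine Finset.sum_congr rfl fun i _ => ?_
        rw [div_mul_div_comm, Real.mul_self_sqrt (hw0 i).le]
      have h2 := Finset.sum_mul_sq_le_sq_mul_sq Finset.univ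
        (fun i => Real.sqrt (w i) / (x + b i) ^ 2) (fun i => Real.sqrt (w i) / ((x + b i) + s))
      have h3 : ∑ i, (Real.sqrt (w i) / (x + b i) ^ 2) ^ 2 ≤ fp / x ^ 2 := by
        rw [hfpdef, Finset.sum_div]
        refine Finset.sum_le_sum fun i _ => ?_
        rw [div_pow, Real.sq_sqrt (hw0 i).le, div_div]
        have hxb2 : x ^ 2 ≤ (x + b i) ^ 2 := by nlinarith [hb i, hxpos]
        have hd2 : (x + b i) ^ 2 * x ^ 2 ≤ (x + b i) ^ 2 * (x + b i) ^ 2 :=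
          mul_le_mul_of_nonneg_left hxb2 (sq_nonneg _)
        have hd1 : (0:ℝ) < (x + b i) ^ 2 * x ^ 2 := by
          have := hy i; positivity
        calc w i / ((x + b i) ^ 2) ^ 2 = w i / ((x + b i) ^ 2 * (x + b i) ^ 2) := by ring_nf
          _ ≤ w i / ((x + b i) ^ 2 * x ^ 2) :=
              div_le_div_of_nonneg_left (hw0 i).le hd1 hd2
      have h4 : ∑ i, (Real.sqrt (w i) / ((x + b i) + s)) ^ 2 = fp' := by
        refine Finset.sum_congr rfl fun i _ => ?_
        rw [div_pow, Real.sq_sqrt (hw0 i).le]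
      calc C ^ 2 = (∑ i, (Real.sqrt (w i) / (x + b i) ^ 2) * (Real.sqrt (w i) / ((x + b i) + s))) ^ 2 := by rw [h1]
        _ ≤ (∑ i, (Real.sqrt (w i) / (x + b i) ^ 2) ^ 2) * ∑ i, (Real.sqrt (w i) / ((x + b i) + s)) ^ 2 := h2
        _ = (∑ i, (Real.sqrt (w i) / (x + b i) ^ 2) ^ 2) * fp' := by rw [h4]
        _ ≤ fp / x ^ 2 * fp' := by
            exact mul_le_mul_of_nonneg_right h3 hfp'.le
    have hC2 : C ≤ Real.sqrt fp / x * Real.sqrt fp' := by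
      have e : Real.sqrt (fp / x ^ 2 * fp') = Real.sqrt fp / x * Real.sqrt fp' := by
        rw [Real.sqrt_mul (by positivity), Real.sqrt_div hfp.le, Real.sqrt_sq hxpos.le]
      calc C = Real.sqrt (C ^ 2) := (Real.sqrt_sq hC).symm
        _ ≤ Real.sqrt (fp / x ^ 2 * fp') := Real.sqrt_le_sqrt hCS
        _ = Real.sqrt fp / x * Real.sqrt fp' := e
    have hkey : (S' - 1) / Real.sqrt fp' ≤ s ^ 2 * Real.sqrt fp / x := by
      rw [hid, div_le_iff₀ hsqfp']
      calc s ^ 2 * C ≤ s ^ 2 * (Real.sqrt fp / x * Real.sqrt fp') :=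
            mul_le_mul_of_nonneg_left hC2 (sq_nonneg s)
        _ = s ^ 2 * Real.sqrt fp / x * Real.sqrt fp' := by ring
    rw [hrhs]
    have h5 : 4 * x ^ 2 * ((S' - 1) / Real.sqrt fp') ≤ 4 * x ^ 2 * (s ^ 2 * Real.sqrt fp / x) :=
      mul_le_mul_of_nonneg_left hkey (by positivity)
    have h6 : 4 * x ^ 2 * (s ^ 2 * Real.sqrt fp / x) = 4 * x * s ^ 2 * Real.sqrt fp := by
      field_simp
    have h7 : 4 * x * s ^ 2 * Real.sqrt fp ≤ (x + s) ^ 2 * (s * Real.sqrt fp) := by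
      nlinarith [mul_nonneg (mul_nonneg hs (Real.sqrt_nonneg fp)) (sq_nonneg (x - s))]
    linarith


theorem newton_aux (d : ℕ) (hd : 0 < d) (w b : Fin d → ℝ)
    (hw1 : ∀ i, 1 ≤ w i) (hw2 : ∀ i, w i ≤ 2) (hb : ∀ i, 0 ≤ b i)
    (i0 : Fin d) (hb0 : b i0 = 0)
    (x : ℕ → ℝ) (hx0 : x 0 = 1)
    (hxrec : ∀ t, x (t+1) = x t + ((∑ i, w i / (x t + b i)) - 1) / (∑ i, w i / (x t + b i) ^ 2))
    (N : ℕ) (hN : Real.sqrt (2*d) * (2*d)^2 < 4^N * (1/2)) :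
    1 ≤ x N ∧ 1 ≤ (∑ i, w i / (x N + b i)) ∧
    ((∑ i, w i / (x N + b i)) - 1) / Real.sqrt (∑ i, w i / (x N + b i) ^ 2) < 1/2 := by
  have hw0 : ∀ i, (0:ℝ) < w i := fun i => lt_of_lt_of_le one_pos (hw1 i)
  have hsumw : ∑ i, w i ≤ 2*d := by
    calc ∑ i, w i ≤ ∑ _i : Fin d, (2:ℝ) := Finset.sum_le_sum fun i _ => hw2 i
      _ = 2*d := by simp [Finset.sum_const, mul_comm]
  have hsumw0 : (0:ℝ) ≤ ∑ i, w i := Finset.sum_nonneg fun i _ => (hw0 i).le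
  have inv : ∀ t, 1 ≤ x t ∧ 1 ≤ (∑ i, w i / (x t + b i)) ∧
      (4:ℝ)^t * (((∑ i, w i / (x t + b i)) - 1) / Real.sqrt (∑ i, w i / (x t + b i) ^ 2))
        ≤ Real.sqrt (2*d) * (x t)^2 := by
    intro t
    induction t with
    | zero =>
      have hx1 : x 0 = 1 := hx0
      have hy : ∀ i, 0 < x 0 + b i := fun i => by have := hb i; rw [hx1]; linarith
      have hS : 1 ≤ ∑ i, w i / (x 0 + b i) := by
        have hterm : w i0 / (x 0 + b i0) = w i0 := by rw [hx1, hb0]; norm_num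
        calc (1:ℝ) ≤ w i0 := hw1 i0
          _ = w i0 / (x 0 + b i0) := hterm.symm
          _ ≤ ∑ i, w i / (x 0 + b i) :=
            Finset.single_le_sum (fun i _ => div_nonneg (hw0 i).le (hy i).le) (Finset.mem_univ i0)
      refine ⟨le_of_eq hx1.symm, hS, ?_⟩
      set S := ∑ i, w i / (x 0 + b i) with hSdef
      set fp := ∑ i, w i / (x 0 + b i) ^ 2 with hfpdef
      have hfp : 0 < fp := Finset.sum_pos (fun i _ => div_pos (hw0 i) (pow_pos (hy i) 2)) ⟨⟨0, hd⟩, Finset.mem_univ _⟩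
      have hsqfp : 0 < Real.sqrt fp := Real.sqrt_pos.mpr hfp
      have hCS : S^2 ≤ (2*d) * fp := by
        have h2 := Finset.sum_mul_sq_le_sq_mul_sq Finset.univ
          (fun i => Real.sqrt (w i)) (fun i => Real.sqrt (w i) / (x 0 + b i))
        have e1 : ∑ i, Real.sqrt (w i) * (Real.sqrt (w i) / (x 0 + b i)) = S := by
          refine Finset.sum_congr rfl fun i _ => ?_
          rw [mul_div_assoc', Real.mul_self_sqrt (hw0 i).le]
        have e2 : ∑ i, (Real.sqrt (w i))^2 = ∑ i, w i := by
          refine Finset.sum_congr rfl fun i _ => Real.sq_sqrt (hw0 i).le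
        have e3 : ∑ i, (Real.sqrt (w i) / (x 0 + b i))^2 = fp := by
          refine Finset.sum_congr rfl fun i _ => by rw [div_pow, Real.sq_sqrt (hw0 i).le]
        rw [e1, e2, e3] at h2
        calc S^2 ≤ (∑ i, w i) * fp := h2
          _ ≤ (2*d) * fp := mul_le_mul_of_nonneg_right hsumw hfp.le
      have hF2 : (S - 1)^2 ≤ (2*d) * fp := by nlinarith [hS]
      have hδ : (S - 1) / Real.sqrt fp ≤ Real.sqrt (2*d) := by
        rw [div_le_iff₀ hsqfp]
        calc S - 1 = Real.sqrt ((S-1)^2) := (Real.sqrt_sq (by linarith)).symm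
          _ ≤ Real.sqrt ((2*d) * fp) := Real.sqrt_le_sqrt hF2
          _ = Real.sqrt (2*d) * Real.sqrt fp := Real.sqrt_mul (by positivity) _
      calc (4:ℝ)^(0:ℕ) * ((S - 1) / Real.sqrt fp) = (S - 1) / Real.sqrt fp := by norm_num
        _ ≤ Real.sqrt (2*d) := hδ
        _ = Real.sqrt (2*d) * (x 0)^2 := by rw [hx1]; norm_num
    | succ t ih =>
      obtain ⟨h1, h2, h3⟩ := ih
      obtain ⟨g1, g2, g3⟩ := newton_step d hd w b hw1 hb (x t) h1 h2
      rw [← hxrec t] at g1 g2 g3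
      refine ⟨g1, g2, ?_⟩
      have hxt2 : (0:ℝ) < (x t)^2 := by positivity
      have h4t : (0:ℝ) < (4:ℝ)^t := by positivity
      refine le_of_mul_le_mul_right ?_ hxt2
      calc (4:ℝ)^(t+1) * (((∑ i, w i / (x (t+1) + b i)) - 1) / Real.sqrt (∑ i, w i / (x (t+1) + b i) ^ 2)) * (x t)^2
          = (4:ℝ)^t * (4 * (x t)^2 * (((∑ i, w i / (x (t+1) + b i)) - 1) / Real.sqrt (∑ i, w i / (x (t+1) + b i) ^ 2))) := by ring
        _ ≤ (4:ℝ)^t * ((x (t+1))^2 * (((∑ i, w i / (x t + b i)) - 1) / Real.sqrt (∑ i, w i / (x t + b i) ^ 2))) :=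
            mul_le_mul_of_nonneg_left g3 h4t.le
        _ = (x (t+1))^2 * ((4:ℝ)^t * (((∑ i, w i / (x t + b i)) - 1) / Real.sqrt (∑ i, w i / (x t + b i) ^ 2))) := by ring
        _ ≤ (x (t+1))^2 * (Real.sqrt (2*d) * (x t)^2) :=
            mul_le_mul_of_nonneg_left h3 (sq_nonneg _)
        _ = Real.sqrt (2*d) * (x (t+1))^2 * (x t)^2 := by ring
  obtain ⟨h1, h2, h3⟩ := inv N
  refine ⟨h1, h2, ?_⟩
  by_contra hcon
  push_neg at hcon
  have hxN : 0 < x N := by linarith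
  have hx2d : x N ≤ 2*d := by
    have hSle : (∑ i, w i / (x N + b i)) ≤ (∑ i, w i) / x N := by
      rw [Finset.sum_div]
      refine Finset.sum_le_sum fun i _ => ?_
      exact div_le_div_of_nonneg_left (hw0 i).le hxN (by have := hb i; linarith)
    have : 1 ≤ (∑ i, w i) / x N := le_trans h2 hSle
    have := (le_div_iff₀ hxN).mp this
    linarith
  have hfpN : 0 < ∑ i, w i / (x N + b i) ^ 2 := by
    refine Finset.sum_pos (fun i _ => div_pos (hw0 i) (pow_pos ?_ 2)) ⟨⟨0, hd⟩, Finset.mem_univ _⟩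
    have := hb i; linarith
  have hchain : (4:ℝ)^N * (1/2) ≤ Real.sqrt (2*d) * (2*d)^2 := by
    calc (4:ℝ)^N * (1/2) ≤ (4:ℝ)^N * (((∑ i, w i / (x N + b i)) - 1) / Real.sqrt (∑ i, w i / (x N + b i) ^ 2)) := by
          apply mul_le_mul_of_nonneg_left hcon (by positivity)
      _ ≤ Real.sqrt (2*d) * (x N)^2 := h3
      _ ≤ Real.sqrt (2*d) * (2*d)^2 := by
          apply mul_le_mul_of_nonneg_left _ (Real.sqrt_nonneg _)
          exact pow_le_pow_left₀ hxN.le hx2d 2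
  linarith




/-- Let T = ⌈(9 + 7 log₂ d)/4⌉. Then the Newton iterate λ_{T+1} lies in the
region of quadratic convergence {λ ∈ D : δ(λ) < 1/2}; that is, λ_{T+1} ∈ D and
|ψ'(λ_{T+1})|/√(ψ''(λ_{T+1})) < 1/2. -/
theorem stmt_12 (d : ℕ) (hd : 0 < d) (η : ℝ) (hη : 0 < η) (g p : Fin d → ℝ)
    (hp : ∀ i, -1 ≤ η * p i ∧ η * p i ≤ 0)
    (istar : Fin d) (histar : ∀ i, g istar ≤ g i)
    (lam : ℕ → ℝ) (hlam0 : lam 0 = 1 - η * g istar)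
    (hrec : ∀ t : ℕ, lam (t + 1) = lam t -
      (1 - ∑ i, (1 - η * p i) / (lam t + η * g i)) /
        (∑ i, (1 - η * p i) / (lam t + η * g i) ^ 2))
    (T : ℕ) (hT : T = ⌈(9 + 7 * Real.logb 2 d) / 4⌉₊) :
    (∀ i, 0 < lam (T + 1) + η * g i) ∧
    |1 - ∑ i, (1 - η * p i) / (lam (T + 1) + η * g i)| /
        Real.sqrt (∑ i, (1 - η * p i) / (lam (T + 1) + η * g i) ^ 2) < 1 / 2 := by
  have hw1 : ∀ i, (1:ℝ) ≤ 1 - η * p i := fun i => by have := (hp i).2; linarith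
  have hw2 : ∀ i, (1:ℝ) - η * p i ≤ 2 := fun i => by have := (hp i).1; linarith
  have hb : ∀ i, (0:ℝ) ≤ η * g i - η * g istar := fun i => by
    have := histar i; nlinarith
  have hb0 : η * g istar - η * g istar = 0 := by ring
  have hx0 : lam 0 + η * g istar = 1 := by rw [hlam0]; ring
  -- sum translations
  have es1 : ∀ t : ℕ, (∑ i, (1 - η * p i) / ((lam t + η * g istar) + (η * g i - η * g istar)))
      = ∑ i, (1 - η * p i) / (lam t + η * g i) :=
    fun t => Finset.sum_congr rfl fun i _ => by congr 1; ring
  have es2 : ∀ t : ℕ, (∑ i, (1 - η * p i) / ((lam t + η * g istar) + (η * g i - η * g istar)) ^ 2)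
      = ∑ i, (1 - η * p i) / (lam t + η * g i) ^ 2 :=
    fun t => Finset.sum_congr rfl fun i _ => by congr 2; ring
  have hxrec : ∀ t : ℕ, lam (t+1) + η * g istar = (lam t + η * g istar) +
      ((∑ i, (1 - η * p i) / ((lam t + η * g istar) + (η * g i - η * g istar))) - 1) /
        (∑ i, (1 - η * p i) / ((lam t + η * g istar) + (η * g i - η * g istar)) ^ 2) := by
    intro t
    rw [es1 t, es2 t, hrec t]
    ring
  have hN : Real.sqrt (2*d) * (2*d)^2 < 4^(T+1) * (1/2) := by
    set L := Real.logb 2 (d:ℝ) with hLdef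
    have hd1 : (1:ℝ) ≤ (d:ℝ) := by exact_mod_cast hd
    have hL0 : 0 ≤ L := Real.logb_nonneg one_lt_two hd1
    have hdL : (2:ℝ) ^ L = (d:ℝ) := Real.rpow_logb two_pos (by norm_num) (by positivity)
    have hTge : (9 + 7*L)/4 ≤ (T:ℝ) := by rw [hT]; exact Nat.le_ceil _
    have hsqrt : Real.sqrt (2*d) ≤ 2*(d:ℝ) := by
      have h := Real.sqrt_le_sqrt (by nlinarith : (2*(d:ℝ)) ≤ (2*(d:ℝ))^2)
      rwa [Real.sqrt_sq (by positivity)] at h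
    have hstep1 : Real.sqrt (2*d) * (2*d)^2 ≤ (2*(d:ℝ))^3 := by
      calc Real.sqrt (2*d) * (2*d)^2 ≤ (2*(d:ℝ)) * (2*d)^2 :=
          mul_le_mul_of_nonneg_right hsqrt (by positivity)
        _ = (2*(d:ℝ))^3 := by ring
    have e1 : (2*(d:ℝ))^3 = (2:ℝ)^(3*L+3 : ℝ) := by
      rw [← hdL, mul_pow, ← Real.rpow_natCast ((2:ℝ)^L) 3, ← Real.rpow_mul (by norm_num : (0:ℝ) ≤ 2),
        ← Real.rpow_natCast (2:ℝ) 3, ← Real.rpow_add (by norm_num : (0:ℝ) < 2)]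
      congr 1
      push_cast
      ring
    have e2 : (4:ℝ)^(T+1) * (1/2) = (2:ℝ)^((2*T+1 : ℕ) : ℝ) := by
      rw [Real.rpow_natCast]
      have h4 : (4:ℝ)^(T+1) = 2^(2*(T+1)) := by
        rw [(by norm_num : (4:ℝ) = 2^2), ← pow_mul]
      rw [h4]
      have h5 : 2*(T+1) = (2*T+1) + 1 := by ring
      rw [h5, pow_succ]
      ring
    have key : (2:ℝ)^(3*L+3 : ℝ) < (2:ℝ)^((2*T+1 : ℕ) : ℝ) := by
      rw [Real.rpow_lt_rpow_left_iff one_lt_two]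
      push_cast
      linarith
    calc Real.sqrt (2*d) * (2*d)^2 ≤ (2*(d:ℝ))^3 := hstep1
      _ = (2:ℝ)^(3*L+3 : ℝ) := e1
      _ < (2:ℝ)^((2*T+1 : ℕ) : ℝ) := key
      _ = (4:ℝ)^(T+1) * (1/2) := e2.symm
  obtain ⟨h1, h2, h3⟩ := newton_aux d hd (fun i => 1 - η * p i)
    (fun i => η * g i - η * g istar) hw1 hw2 hb istar hb0
    (fun t => lam t + η * g istar) hx0 hxrec (T+1) hN
  rw [es1 (T+1)] at h2
  rw [es1 (T+1), es2 (T+1)] at h3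
  constructor
  · intro i
    have hbi := hb i
    have : lam (T+1) + η * g i = (lam (T+1) + η * g istar) + (η * g i - η * g istar) := by ring
    rw [this]
    linarith
  · have habs : |1 - ∑ i, (1 - η * p i) / (lam (T+1) + η * g i)|
        = (∑ i, (1 - η * p i) / (lam (T+1) + η * g i)) - 1 := by
      rw [abs_of_nonpos (by linarith)]
      ring
    rw [habs]
    exact h3
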